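/- Let a, b, c > 0 be real numbers with a + b ≠ c, let γ > −1 be real, and let k, l ∈ ℕ₀ with l ≤ k. Then ∫₀^∞ L_l^{γ}(a t) L_k^{γ}(b t) e^{−c t} t^{γ} dt = [Γ(k+γ+1)/k!] · (c−b)^{k−l} (a+b−c)^{l} / c^{k+γ+1} · P_l^{(k−l, γ)}( 1 − 2 (c−a)(c−b) / (c (c−a−b)) ), where Γ is the Gamma function. -/

import Mathlib

open MeasureTheory

/-- Generalized binomial coefficient `C(t, j) = t(t-1)⋯(t-j+1)/j!`. -/
noncomputable def genChoose (t : ℝ) (j : ℕ) : ℝ :=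
  (∏ i ∈ Finset.range j, (t - (i : ℝ))) / (Nat.factorial j : ℝ)

/-- Laguerre polynomial `L_k^γ(x) = ∑_{j=0}^k (-1)^j C(k+γ, k-j) x^j / j!`. -/
noncomputable def laguerre (γ : ℝ) (k : ℕ) (x : ℝ) : ℝ :=
  ∑ j ∈ Finset.range (k + 1),
    (-1 : ℝ) ^ j * genChoose ((k : ℝ) + γ) (k - j) * x ^ j / (Nat.factorial j : ℝ)

/-- Jacobi polynomial
`P_n^{(α,β)}(x) = ∑_{s=0}^n C(n+α, n-s) C(n+β, s) ((x-1)/2)^s ((x+1)/2)^{n-s}`. -/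
noncomputable def jacobi (α β : ℝ) (n : ℕ) (x : ℝ) : ℝ :=
  ∑ s ∈ Finset.range (n + 1),
    genChoose ((n : ℝ) + α) (n - s) * genChoose ((n : ℝ) + β) s *
      ((x - 1) / 2) ^ s * ((x + 1) / 2) ^ (n - s)

open Finset

noncomputable def Pg (γ : ℝ) (n : ℕ) : ℝ := ∏ m ∈ Finset.range n, (γ + 1 + (m : ℝ))

lemma genChoose_zero (t : ℝ) : genChoose t 0 = 1 := by simp [genChoose]

lemma genChoose_pascal (x : ℝ) (n : ℕ) :
    genChoose (x + 1) (n + 1) = genChoose x (n + 1) + genChoose x n := by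
  have h1 : ∏ i ∈ range (n + 1), (x + 1 - (i : ℝ)) = (x + 1) * ∏ i ∈ range n, (x - (i : ℝ)) := by
    rw [Finset.prod_range_succ']
    simp only [Nat.cast_add, Nat.cast_one, Nat.cast_zero]
    rw [Finset.prod_congr rfl (fun i _ => by ring : ∀ i ∈ range n, (x + 1 - ((i:ℝ)+1)) = x - i)]
    ring
  have h2 : ∏ i ∈ range (n + 1), (x - (i : ℝ)) = (∏ i ∈ range n, (x - (i : ℝ))) * (x - n) :=
    Finset.prod_range_succ _ _
  have hf : (Nat.factorial (n+1) : ℝ) = (n+1) * Nat.factorial n := by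
    rw [Nat.factorial_succ]; push_cast; ring
  have hfn : (Nat.factorial n : ℝ) ≠ 0 := Nat.cast_ne_zero.2 (Nat.factorial_ne_zero n)
  have hfn1 : (Nat.factorial (n+1) : ℝ) ≠ 0 := Nat.cast_ne_zero.2 (Nat.factorial_ne_zero _)
  unfold genChoose
  rw [h1, h2, hf]
  field_simp
  ring

lemma vandermonde (j : ℕ) : ∀ (n : ℕ) (x : ℝ),
    ∑ m ∈ range (n + 1), (j.choose m : ℝ) * genChoose x (n - m) = genChoose (x + j) n := by
  induction j with
  | zero =>
    intro n x
    rw [Finset.sum_eq_single 0]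
    · simp
    · intro m _ hm
      rcases Nat.exists_eq_succ_of_ne_zero hm with ⟨p, rfl⟩
      simp
    · simp
  | succ j ih =>
    intro n x
    induction n with
    | zero => simp [genChoose_zero]
    | succ n _ =>
      rw [Finset.sum_range_succ']
      have e1 : ∀ m ∈ range (n+1), ((j+1).choose (m+1) : ℝ) * genChoose x (n + 1 - (m+1))
          = (j.choose m : ℝ) * genChoose x (n - m) + (j.choose (m+1) : ℝ) * genChoose x (n - m) := by
        intro m _
        have hnm : n + 1 - (m + 1) = n - m := by omega
        rw [hnm, Nat.choose_succ_succ', Nat.cast_add]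
        ring
      rw [Finset.sum_congr rfl e1, Finset.sum_add_distrib]
      have e2 : (∑ m ∈ range (n+1), (j.choose (m+1) : ℝ) * genChoose x (n - m))
          + ((j+1).choose 0 : ℝ) * genChoose x (n + 1 - 0)
          = ∑ m ∈ range (n+2), (j.choose m : ℝ) * genChoose x (n + 1 - m) := by
        conv_rhs => rw [Finset.sum_range_succ']
        simp [Nat.succ_sub_succ]
      rw [add_assoc, e2, ih n x, ih (n+1) x]
      have : x + ((j:ℝ) + 1) = (x + j) + 1 := by push_cast; ring
      push_cast
      rw [this, genChoose_pascal]
      ring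

lemma genChoose_trinomial (t : ℝ) {A B : ℕ} (h : B ≤ A) :
    genChoose t A * (A.choose B : ℝ) = genChoose t B * genChoose (t - B) (A - B) := by
  obtain ⟨D, rfl⟩ := Nat.exists_eq_add_of_le h
  have hp : ∏ i ∈ range (B + D), (t - (i : ℝ))
      = (∏ i ∈ range B, (t - (i : ℝ))) * ∏ i ∈ range D, (t - (B:ℝ) - (i : ℝ)) := by
    rw [Finset.prod_range_add]
    congr 1
    exact Finset.prod_congr rfl (fun i _ => by push_cast; ring)
  have hc : ((B + D).choose B : ℝ) * (Nat.factorial B : ℝ) * (Nat.factorial D : ℝ)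
      = (Nat.factorial (B + D) : ℝ) := by
    have := Nat.choose_mul_factorial_mul_factorial (Nat.le_add_right B D)
    rw [Nat.add_sub_cancel_left] at this
    exact_mod_cast congrArg (Nat.cast : ℕ → ℝ) this
  have hB : (Nat.factorial B : ℝ) ≠ 0 := Nat.cast_ne_zero.2 (Nat.factorial_ne_zero _)
  have hD : (Nat.factorial D : ℝ) ≠ 0 := Nat.cast_ne_zero.2 (Nat.factorial_ne_zero _)
  have hBD : (Nat.factorial (B+D) : ℝ) ≠ 0 := Nat.cast_ne_zero.2 (Nat.factorial_ne_zero _)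
  unfold genChoose
  rw [hp, Nat.add_sub_cancel_left]
  field_simp
  rw [← hc]
  ring


lemma prod_reflect_lin (x : ℝ) (n : ℕ) :
    ∏ i ∈ range n, (x - (i : ℝ)) = ∏ i ∈ range n, (x - n + 1 + (i : ℝ)) := by
  rw [← Finset.prod_range_reflect (fun i => x - (n:ℝ) + 1 + (i : ℝ)) n]
  refine Finset.prod_congr rfl fun i hi => ?_
  rw [Finset.mem_range] at hi
  have h1 : ((n - 1 - i : ℕ) : ℝ) = (n : ℝ) - 1 - i := by
    have : 1 + i ≤ n := by omega
    push_cast [Nat.cast_sub (by omega : 1 ≤ n), Nat.cast_sub this]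
    have h2 : (n - 1 - i : ℕ) = n - (1 + i) := by omega
    rw [h2, Nat.cast_sub this]
    push_cast; ring
  rw [h1]; ring

lemma Pg_factor (γ : ℝ) {j n : ℕ} (h : j ≤ n) :
    Pg γ n = Pg γ j * ∏ i ∈ range (n - j), ((n : ℝ) + γ - i) := by
  obtain ⟨D, rfl⟩ := Nat.exists_eq_add_of_le h
  rw [Nat.add_sub_cancel_left]
  unfold Pg
  rw [Finset.prod_range_add]
  congr 1
  rw [prod_reflect_lin ((j + D : ℕ) + γ) D]
  refine Finset.prod_congr rfl fun i _ => ?_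
  push_cast; ring

lemma star {k j : ℕ} (i : ℕ) (hj : j ≤ k) (γ : ℝ) :
    genChoose ((k:ℝ) + γ) (k - j) * Pg γ (i + j) / ((Nat.factorial i : ℝ) * (Nat.factorial j : ℝ))
    = Pg γ k / (Nat.factorial k : ℝ) * (k.choose j : ℝ) * genChoose (γ + i + j) i := by
  have hA : Pg γ k = Pg γ j * ∏ i ∈ range (k - j), ((k : ℝ) + γ - i) := Pg_factor γ hj
  have hB : Pg γ (i + j) = Pg γ j * ∏ m ∈ range i, (γ + (i:ℝ) + (j:ℝ) - m) := by
    rw [show i + j = j + i from Nat.add_comm i j, Pg_factor γ (Nat.le_add_right j i),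
      Nat.add_sub_cancel_left]
    congr 1
    refine Finset.prod_congr rfl fun m _ => ?_
    push_cast; ring
  have hc : (k.choose j : ℝ) * (Nat.factorial j : ℝ) * (Nat.factorial (k - j) : ℝ)
      = (Nat.factorial k : ℝ) := by
    exact_mod_cast congrArg (Nat.cast : ℕ → ℝ) (Nat.choose_mul_factorial_mul_factorial hj)
  have h1 : (Nat.factorial i : ℝ) ≠ 0 := Nat.cast_ne_zero.2 (Nat.factorial_ne_zero _)
  have h2 : (Nat.factorial j : ℝ) ≠ 0 := Nat.cast_ne_zero.2 (Nat.factorial_ne_zero _)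
  have h3 : (Nat.factorial k : ℝ) ≠ 0 := Nat.cast_ne_zero.2 (Nat.factorial_ne_zero _)
  have h4 : (Nat.factorial (k-j) : ℝ) ≠ 0 := Nat.cast_ne_zero.2 (Nat.factorial_ne_zero _)
  unfold genChoose
  rw [hA, hB]
  field_simp
  rw [← hc]
  ring

lemma choose_helper {k j : ℕ} (m : ℕ) (hj : j ≤ k) :
    (k.choose m : ℝ) * ((k - m).choose (k - j) : ℝ) = (k.choose j : ℝ) * (j.choose m : ℝ) := by
  rcases le_or_gt m j with hmj | hmj
  · have h1 : (k - m).choose (k - j) = (k - m).choose (j - m) := by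
      rw [← Nat.choose_symm (by omega : k - j ≤ k - m)]
      congr 1; omega
    rw [h1]
    have e1 : (k.choose m : ℝ) = (Nat.factorial k : ℝ) / (Nat.factorial m * Nat.factorial (k - m)) :=
      by rw [Nat.cast_choose ℝ (le_trans hmj hj)]
    have e2 : ((k - m).choose (j - m) : ℝ)
        = (Nat.factorial (k-m) : ℝ) / (Nat.factorial (j-m) * Nat.factorial (k - m - (j - m))) := by
      rw [Nat.cast_choose ℝ (by omega : j - m ≤ k - m)]
    have e3 : (k.choose j : ℝ) = (Nat.factorial k : ℝ) / (Nat.factorial j * Nat.factorial (k - j)) :=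
      by rw [Nat.cast_choose ℝ hj]
    have e4 : (j.choose m : ℝ) = (Nat.factorial j : ℝ) / (Nat.factorial m * Nat.factorial (j - m)) :=
      by rw [Nat.cast_choose ℝ hmj]
    have h5 : k - m - (j - m) = k - j := by omega
    rw [e1, e2, e3, e4, h5]
    have f1 : (Nat.factorial m : ℝ) ≠ 0 := Nat.cast_ne_zero.2 (Nat.factorial_ne_zero _)
    have f2 : (Nat.factorial (k-m) : ℝ) ≠ 0 := Nat.cast_ne_zero.2 (Nat.factorial_ne_zero _)
    have f3 : (Nat.factorial (j-m) : ℝ) ≠ 0 := Nat.cast_ne_zero.2 (Nat.factorial_ne_zero _)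
    have f4 : (Nat.factorial (k-j) : ℝ) ≠ 0 := Nat.cast_ne_zero.2 (Nat.factorial_ne_zero _)
    have f5 : (Nat.factorial j : ℝ) ≠ 0 := Nat.cast_ne_zero.2 (Nat.factorial_ne_zero _)
    field_simp
  · rcases le_or_gt m k with hmk | hmk
    · have h1 : (k - m).choose (k - j) = 0 := Nat.choose_eq_zero_of_lt (by omega)
      have h2 : j.choose m = 0 := Nat.choose_eq_zero_of_lt hmj
      rw [h1, h2]; simp
    · have h1 : k.choose m = 0 := Nat.choose_eq_zero_of_lt hmk
      have h2 : j.choose m = 0 := Nat.choose_eq_zero_of_lt hmj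
      rw [h1, h2]; simp

lemma genChoose_natCast (n j : ℕ) : genChoose (n : ℝ) j = (n.choose j : ℝ) := by
  rcases le_or_gt j n with h | h
  · have hp : ∏ i ∈ range j, ((n : ℝ) - i) = ((n.descFactorial j : ℕ) : ℝ) := by
      rw [Nat.descFactorial_eq_prod_range]
      push_cast [Nat.cast_prod]
      refine Finset.prod_congr rfl fun i hi => ?_
      rw [Finset.mem_range] at hi
      rw [Nat.cast_sub (by omega)]
    unfold genChoose
    rw [hp, Nat.descFactorial_eq_factorial_mul_choose]
    push_cast
    rw [mul_comm, mul_div_assoc, div_self (Nat.cast_ne_zero.2 (Nat.factorial_ne_zero _)), mul_one]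
  · unfold genChoose
    rw [Finset.prod_eq_zero (Finset.mem_range.2 h) (by simp : (n:ℝ) - (n:ℕ) = 0)]
    rw [Nat.choose_eq_zero_of_lt h]
    simp

lemma binom_shift {n m : ℕ} (hm : m ≤ n) (x c : ℝ) :
    ∑ i ∈ range (n + 1), ((n - m).choose (n - i) : ℝ) * x ^ i * c ^ (n - i)
      = x ^ m * (c + x) ^ (n - m) := by
  rw [Finset.range_eq_Ico, ← Finset.sum_Ico_consecutive _ (Nat.zero_le m) (by omega : m ≤ n + 1)]
  have h0 : ∑ i ∈ Finset.Ico 0 m, ((n - m).choose (n - i) : ℝ) * x ^ i * c ^ (n - i) = 0 := by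
    apply Finset.sum_eq_zero
    intro i hi
    rw [Finset.mem_Ico] at hi
    rw [Nat.choose_eq_zero_of_lt (by omega)]
    simp
  rw [h0, zero_add, Finset.sum_Ico_eq_sum_range]
  have hn : n + 1 - m = (n - m) + 1 := by omega
  rw [hn]
  have e : ∀ p ∈ range (n - m + 1),
      ((n - m).choose (n - (m + p)) : ℝ) * x ^ (m + p) * c ^ (n - (m + p))
      = x ^ m * (x ^ p * c ^ (n - m - p) * ((n - m).choose p : ℝ)) := by
    intro p hp
    rw [Finset.mem_range] at hp
    have h1 : n - (m + p) = (n - m) - p := by omega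
    have h2 : (n - m).choose ((n - m) - p) = (n - m).choose p := Nat.choose_symm (by omega)
    rw [h1, h2, pow_add]
    ring
  rw [Finset.sum_congr rfl e, ← Finset.mul_sum, ← Commute.add_pow (Commute.all x c), add_comm x c]

lemma IDENT {l k i j : ℕ} (hil : i ≤ l) (hjk : j ≤ k) (hlk : l ≤ k) (γ : ℝ) :
    genChoose ((l:ℝ) + γ) (l - i) * genChoose ((k:ℝ) + γ) (k - j) * Pg γ (i + j)
      / ((Nat.factorial i : ℝ) * (Nat.factorial j : ℝ))
    = Pg γ k / (Nat.factorial k : ℝ) *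
        ∑ m ∈ range (l + 1), (k.choose m : ℝ) * genChoose ((l:ℝ) + γ) (l - m)
          * ((l - m).choose (l - i) : ℝ) * ((k - m).choose (k - j) : ℝ) := by
  have hsub : ∑ m ∈ range (l + 1), (k.choose m : ℝ) * genChoose ((l:ℝ) + γ) (l - m)
          * ((l - m).choose (l - i) : ℝ) * ((k - m).choose (k - j) : ℝ)
      = ∑ m ∈ range (i + 1), (k.choose m : ℝ) * genChoose ((l:ℝ) + γ) (l - m)
          * ((l - m).choose (l - i) : ℝ) * ((k - m).choose (k - j) : ℝ) := by
    symm
    apply Finset.sum_subset (Finset.range_subset_range.2 (by omega))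
    intro m hm hnm
    rw [Finset.mem_range] at hm
    rw [Finset.mem_range] at hnm
    rw [Nat.choose_eq_zero_of_lt (by omega : l - m < l - i)]
    simp
  have e : ∀ m ∈ range (i + 1), (k.choose m : ℝ) * genChoose ((l:ℝ) + γ) (l - m)
          * ((l - m).choose (l - i) : ℝ) * ((k - m).choose (k - j) : ℝ)
      = ((k.choose j : ℝ) * genChoose ((l:ℝ) + γ) (l - i))
          * ((j.choose m : ℝ) * genChoose (γ + (i:ℝ)) (i - m)) := by
    intro m hm
    rw [Finset.mem_range] at hm
    have h1 : (k.choose m : ℝ) * ((k - m).choose (k - j) : ℝ)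
        = (k.choose j : ℝ) * (j.choose m : ℝ) := choose_helper m hjk
    have h2 : genChoose ((l:ℝ) + γ) (l - m) * ((l - m).choose (l - i) : ℝ)
        = genChoose ((l:ℝ) + γ) (l - i) * genChoose (γ + (i:ℝ)) (i - m) := by
      have ht := genChoose_trinomial ((l:ℝ) + γ) (by omega : l - i ≤ l - m)
      have harg : (l:ℝ) + γ - ((l - i : ℕ) : ℝ) = γ + (i:ℝ) := by
        rw [Nat.cast_sub hil]; ring
      have hidx : (l - m) - (l - i) = i - m := by omega
      rw [harg, hidx] at ht
      exact ht
    calc (k.choose m : ℝ) * genChoose ((l:ℝ) + γ) (l - m)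
          * ((l - m).choose (l - i) : ℝ) * ((k - m).choose (k - j) : ℝ)
        = ((k.choose m : ℝ) * ((k - m).choose (k - j) : ℝ))
            * (genChoose ((l:ℝ) + γ) (l - m) * ((l - m).choose (l - i) : ℝ)) := by ring
      _ = ((k.choose j : ℝ) * (j.choose m : ℝ))
            * (genChoose ((l:ℝ) + γ) (l - i) * genChoose (γ + (i:ℝ)) (i - m)) := by rw [h1, h2]
      _ = ((k.choose j : ℝ) * genChoose ((l:ℝ) + γ) (l - i))
            * ((j.choose m : ℝ) * genChoose (γ + (i:ℝ)) (i - m)) := by ring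
  rw [hsub, Finset.sum_congr rfl e, ← Finset.mul_sum, vandermonde j i (γ + (i:ℝ))]
  have hx := star i hjk γ
  linear_combination genChoose ((l:ℝ) + γ) (l - i) * hx

lemma main_sum (a b c γ : ℝ) {k l : ℕ} (hlk : l ≤ k) :
    ∑ i ∈ range (l + 1), ∑ j ∈ range (k + 1),
      (-1:ℝ) ^ (i + j) * genChoose ((l:ℝ) + γ) (l - i) * genChoose ((k:ℝ) + γ) (k - j)
        * Pg γ (i + j) * a ^ i * b ^ j * c ^ ((l - i) + (k - j))
        / ((Nat.factorial i : ℝ) * (Nat.factorial j : ℝ))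
    = Pg γ k / (Nat.factorial k : ℝ) * ∑ s ∈ range (l + 1),
        (k.choose (l - s) : ℝ) * genChoose ((l:ℝ) + γ) s * (c - a) ^ s * (c - b) ^ (k - l + s)
          * (a * b) ^ (l - s) := by
  have key : ∀ i ∈ range (l + 1), ∀ j ∈ range (k + 1),
      (-1:ℝ) ^ (i + j) * genChoose ((l:ℝ) + γ) (l - i) * genChoose ((k:ℝ) + γ) (k - j)
        * Pg γ (i + j) * a ^ i * b ^ j * c ^ ((l - i) + (k - j))
        / ((Nat.factorial i : ℝ) * (Nat.factorial j : ℝ))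
      = ∑ m ∈ range (l + 1),
          Pg γ k / (Nat.factorial k : ℝ) * ((k.choose m : ℝ) * genChoose ((l:ℝ) + γ) (l - m))
            * (((l - m).choose (l - i) : ℝ) * (-a) ^ i * c ^ (l - i))
            * (((k - m).choose (k - j) : ℝ) * (-b) ^ j * c ^ (k - j)) := by
    intro i hi j hj
    rw [Finset.mem_range] at hi hj
    have step1 : (-1:ℝ) ^ (i + j) * genChoose ((l:ℝ) + γ) (l - i) * genChoose ((k:ℝ) + γ) (k - j)
        * Pg γ (i + j) * a ^ i * b ^ j * c ^ ((l - i) + (k - j))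
        / ((Nat.factorial i : ℝ) * (Nat.factorial j : ℝ))
      = (genChoose ((l:ℝ) + γ) (l - i) * genChoose ((k:ℝ) + γ) (k - j) * Pg γ (i + j)
          / ((Nat.factorial i : ℝ) * (Nat.factorial j : ℝ)))
          * ((-a) ^ i * c ^ (l - i)) * ((-b) ^ j * c ^ (k - j)) := by
      rw [neg_pow, neg_pow, pow_add, pow_add]
      ring
    rw [step1, IDENT (by omega) (by omega) hlk γ, Finset.mul_sum, Finset.sum_mul, Finset.sum_mul]
    refine Finset.sum_congr rfl fun m _ => by ring
  calc ∑ i ∈ range (l + 1), ∑ j ∈ range (k + 1),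
      (-1:ℝ) ^ (i + j) * genChoose ((l:ℝ) + γ) (l - i) * genChoose ((k:ℝ) + γ) (k - j)
        * Pg γ (i + j) * a ^ i * b ^ j * c ^ ((l - i) + (k - j))
        / ((Nat.factorial i : ℝ) * (Nat.factorial j : ℝ))
      = ∑ i ∈ range (l + 1), ∑ j ∈ range (k + 1), ∑ m ∈ range (l + 1),
          Pg γ k / (Nat.factorial k : ℝ) * ((k.choose m : ℝ) * genChoose ((l:ℝ) + γ) (l - m))
            * (((l - m).choose (l - i) : ℝ) * (-a) ^ i * c ^ (l - i))
            * (((k - m).choose (k - j) : ℝ) * (-b) ^ j * c ^ (k - j)) := by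
        exact Finset.sum_congr rfl fun i hi => Finset.sum_congr rfl fun j hj => key i hi j hj
    _ = ∑ m ∈ range (l + 1), ∑ i ∈ range (l + 1), ∑ j ∈ range (k + 1),
          Pg γ k / (Nat.factorial k : ℝ) * ((k.choose m : ℝ) * genChoose ((l:ℝ) + γ) (l - m))
            * (((l - m).choose (l - i) : ℝ) * (-a) ^ i * c ^ (l - i))
            * (((k - m).choose (k - j) : ℝ) * (-b) ^ j * c ^ (k - j)) := by
        rw [Finset.sum_congr rfl fun i _ => Finset.sum_comm]
        exact Finset.sum_comm
    _ = ∑ m ∈ range (l + 1),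
          Pg γ k / (Nat.factorial k : ℝ) * ((k.choose m : ℝ) * genChoose ((l:ℝ) + γ) (l - m))
            * (∑ i ∈ range (l + 1), ((l - m).choose (l - i) : ℝ) * (-a) ^ i * c ^ (l - i))
            * (∑ j ∈ range (k + 1), ((k - m).choose (k - j) : ℝ) * (-b) ^ j * c ^ (k - j)) := by
        refine Finset.sum_congr rfl fun m _ => ?_
        rw [mul_assoc, Finset.sum_mul_sum, Finset.mul_sum]
        refine Finset.sum_congr rfl fun i _ => ?_
        rw [Finset.mul_sum]
        refine Finset.sum_congr rfl fun j _ => by ring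
    _ = ∑ m ∈ range (l + 1),
          Pg γ k / (Nat.factorial k : ℝ) * ((k.choose m : ℝ) * genChoose ((l:ℝ) + γ) (l - m))
            * ((-a) ^ m * (c + -a) ^ (l - m)) * ((-b) ^ m * (c + -b) ^ (k - m)) := by
        refine Finset.sum_congr rfl fun m hm => ?_
        rw [Finset.mem_range] at hm
        rw [binom_shift (by omega : m ≤ l) (-a) c, binom_shift (by omega : m ≤ k) (-b) c]
    _ = Pg γ k / (Nat.factorial k : ℝ) * ∑ s ∈ range (l + 1),
        (k.choose (l - s) : ℝ) * genChoose ((l:ℝ) + γ) s * (c - a) ^ s * (c - b) ^ (k - l + s)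
          * (a * b) ^ (l - s) := by
        rw [Finset.mul_sum, ← Finset.sum_range_reflect]
        refine Finset.sum_congr rfl fun m hm => ?_
        rw [Finset.mem_range] at hm
        simp only [Nat.add_sub_cancel]
        have h1 : l - (l - m) = m := by omega
        have h2 : k - (l - m) = k - l + m := by omega
        rw [h1, h2]
        have h3 : (-a) ^ (l - m) * (-b) ^ (l - m) = (a * b) ^ (l - m) := by
          rw [← mul_pow, neg_mul_neg]
        have h4 : (c + -a) = c - a := by ring
        have h5 : (c + -b) = c - b := by ring
        rw [h4, h5, ← h3]
        ring

lemma Gamma_Pg {γ : ℝ} (hγ : -1 < γ) (n : ℕ) :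
    Real.Gamma (γ + 1 + n) = Real.Gamma (γ + 1) * Pg γ n := by
  induction n with
  | zero => simp [Pg]
  | succ n ih =>
    have h : γ + 1 + ((n : ℕ) + 1 : ℕ) = (γ + 1 + n) + 1 := by push_cast; ring
    have hne : γ + 1 + (n : ℝ) ≠ 0 := by
      have : (0:ℝ) ≤ n := Nat.cast_nonneg n
      intro hz; linarith [hγ]
    rw [h, Real.Gamma_add_one hne, ih]
    unfold Pg
    rw [Finset.prod_range_succ]
    ring

lemma integ {c γ : ℝ} (hc : 0 < c) (hγ : -1 < γ) (n : ℕ) :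
    IntegrableOn (fun t : ℝ => t ^ n * Real.exp (-(c * t)) * t ^ γ) (Set.Ioi 0) := by
  have hs : (-1 : ℝ) < (n : ℝ) + γ := by
    have : (0:ℝ) ≤ n := Nat.cast_nonneg n
    linarith
  have h := integrableOn_rpow_mul_exp_neg_mul_rpow hs one_pos hc
  refine h.congr_fun (fun x hx => ?_) measurableSet_Ioi
  have hx0 : (0:ℝ) < x := hx
  dsimp only
  rw [Real.rpow_one, Real.rpow_add hx0, Real.rpow_natCast]
  ring_nf

lemma intval {c γ : ℝ} (hc : 0 < c) (hγ : -1 < γ) (n : ℕ) :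
    ∫ t in Set.Ioi (0:ℝ), t ^ n * Real.exp (-(c * t)) * t ^ γ
      = Real.Gamma ((n : ℝ) + γ + 1) / c ^ ((n : ℝ) + γ + 1) := by
  have hpos : (0:ℝ) < (n : ℝ) + γ + 1 := by
    have : (0:ℝ) ≤ n := Nat.cast_nonneg n
    linarith
  have h := Real.integral_rpow_mul_exp_neg_mul_Ioi hpos hc
  calc ∫ t in Set.Ioi (0:ℝ), t ^ n * Real.exp (-(c * t)) * t ^ γ
      = ∫ t in Set.Ioi (0:ℝ), t ^ ((n : ℝ) + γ + 1 - 1) * Real.exp (-(c * t)) := by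
        refine setIntegral_congr_fun measurableSet_Ioi (fun x hx => ?_)
        have hx0 : (0:ℝ) < x := hx
        rw [show (n : ℝ) + γ + 1 - 1 = (n : ℝ) + γ by ring, Real.rpow_add hx0, Real.rpow_natCast]
        ring
    _ = (1 / c) ^ ((n : ℝ) + γ + 1) * Real.Gamma ((n : ℝ) + γ + 1) := h
    _ = Real.Gamma ((n : ℝ) + γ + 1) / c ^ ((n : ℝ) + γ + 1) := by
        rw [one_div, Real.inv_rpow hc.le, inv_mul_eq_div]

lemma expand_integrand (a b c γ : ℝ) (k l : ℕ) (t : ℝ) :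
    laguerre γ l (a * t) * laguerre γ k (b * t) * Real.exp (-(c * t)) * t ^ γ
    = ∑ i ∈ range (l + 1), ∑ j ∈ range (k + 1),
        ((-1:ℝ) ^ i * genChoose ((l:ℝ) + γ) (l - i) * a ^ i / (Nat.factorial i : ℝ))
          * ((-1:ℝ) ^ j * genChoose ((k:ℝ) + γ) (k - j) * b ^ j / (Nat.factorial j : ℝ))
          * (t ^ (i + j) * Real.exp (-(c * t)) * t ^ γ) := by
  unfold laguerre
  rw [Finset.sum_mul_sum, Finset.sum_mul, Finset.sum_mul]
  refine Finset.sum_congr rfl fun i _ => ?_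
  rw [Finset.sum_mul, Finset.sum_mul]
  refine Finset.sum_congr rfl fun j _ => ?_
  rw [mul_pow, mul_pow, pow_add]
  ring

theorem stmt4 (a b c γ : ℝ) (ha : 0 < a) (hb : 0 < b) (hc : 0 < c) (habc : a + b ≠ c)
    (hγ : -1 < γ) (k l : ℕ) (hlk : l ≤ k) :
    (∫ t in Set.Ioi (0 : ℝ),
        laguerre γ l (a * t) * laguerre γ k (b * t) * Real.exp (-(c * t)) * t ^ γ)
      = Real.Gamma ((k : ℝ) + γ + 1) / (Nat.factorial k : ℝ) *
          ((c - b) ^ (k - l) * (a + b - c) ^ l / c ^ ((k : ℝ) + γ + 1)) *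
          jacobi ((k : ℝ) - (l : ℝ)) γ l
            (1 - 2 * ((c - a) * (c - b) / (c * (c - a - b)))) := by
  have hγ1 : (0:ℝ) < γ + 1 := by linarith
  have hΓ : Real.Gamma (γ + 1) ≠ 0 := (Real.Gamma_pos_of_pos hγ1).ne'
  have hX : (0:ℝ) < c ^ (γ + 1) := Real.rpow_pos_of_pos hc _
  have hw : a + b - c ≠ 0 := sub_ne_zero.2 habc
  have hcab : c - a - b ≠ 0 := by intro h; apply habc; linarith
  have hfk : (Nat.factorial k : ℝ) ≠ 0 := Nat.cast_ne_zero.2 (Nat.factorial_ne_zero _)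
  -- Step 1: compute the integral as a double sum
  have step1 : (∫ t in Set.Ioi (0 : ℝ),
        laguerre γ l (a * t) * laguerre γ k (b * t) * Real.exp (-(c * t)) * t ^ γ)
      = ∑ i ∈ range (l + 1), ∑ j ∈ range (k + 1),
          ((-1:ℝ) ^ i * genChoose ((l:ℝ) + γ) (l - i) * a ^ i / (Nat.factorial i : ℝ))
            * ((-1:ℝ) ^ j * genChoose ((k:ℝ) + γ) (k - j) * b ^ j / (Nat.factorial j : ℝ))
            * (Real.Gamma (((i + j : ℕ) : ℝ) + γ + 1) / c ^ (((i + j : ℕ) : ℝ) + γ + 1)) := by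
    have hfe : (fun t : ℝ => laguerre γ l (a * t) * laguerre γ k (b * t)
          * Real.exp (-(c * t)) * t ^ γ)
        = fun t : ℝ => ∑ i ∈ range (l + 1), ∑ j ∈ range (k + 1),
            ((-1:ℝ) ^ i * genChoose ((l:ℝ) + γ) (l - i) * a ^ i / (Nat.factorial i : ℝ))
              * ((-1:ℝ) ^ j * genChoose ((k:ℝ) + γ) (k - j) * b ^ j / (Nat.factorial j : ℝ))
              * (t ^ (i + j) * Real.exp (-(c * t)) * t ^ γ) :=
      funext (expand_integrand a b c γ k l)
    rw [hfe]
    rw [integral_finset_sum _ (fun i _ => integrable_finset_sum _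
      (fun j _ => ((integ hc hγ (i + j)).const_mul _)))]
    refine Finset.sum_congr rfl fun i _ => ?_
    rw [integral_finset_sum _ (fun j _ => (integ hc hγ (i + j)).const_mul _)]
    refine Finset.sum_congr rfl fun j _ => ?_
    rw [integral_const_mul, intval hc hγ (i + j)]
  -- Step 2: rewrite each term and apply the main combinatorial identity
  have step2 : ∀ i ∈ range (l + 1), ∀ j ∈ range (k + 1),
      ((-1:ℝ) ^ i * genChoose ((l:ℝ) + γ) (l - i) * a ^ i / (Nat.factorial i : ℝ))
        * ((-1:ℝ) ^ j * genChoose ((k:ℝ) + γ) (k - j) * b ^ j / (Nat.factorial j : ℝ))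
        * (Real.Gamma (((i + j : ℕ) : ℝ) + γ + 1) / c ^ (((i + j : ℕ) : ℝ) + γ + 1))
      = Real.Gamma (γ + 1) / c ^ (γ + 1) / c ^ (k + l) *
          ((-1:ℝ) ^ (i + j) * genChoose ((l:ℝ) + γ) (l - i) * genChoose ((k:ℝ) + γ) (k - j)
            * Pg γ (i + j) * a ^ i * b ^ j * c ^ ((l - i) + (k - j))
            / ((Nat.factorial i : ℝ) * (Nat.factorial j : ℝ))) := by
    intro i hi j hj
    rw [Finset.mem_range] at hi hj
    have hG : Real.Gamma (((i + j : ℕ) : ℝ) + γ + 1) = Real.Gamma (γ + 1) * Pg γ (i + j) := by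
      rw [show ((i + j : ℕ) : ℝ) + γ + 1 = γ + 1 + ((i + j : ℕ) : ℝ) by ring]
      exact Gamma_Pg hγ (i + j)
    have hcp : c ^ (((i + j : ℕ) : ℝ) + γ + 1) = c ^ (γ + 1) * c ^ (i + j) := by
      rw [show ((i + j : ℕ) : ℝ) + γ + 1 = (γ + 1) + ((i + j : ℕ) : ℝ) by ring,
        Real.rpow_add hc, Real.rpow_natCast]
    have hpow : c ^ (k + l) = c ^ ((l - i) + (k - j)) * c ^ (i + j) := by
      rw [← pow_add]; congr 1; omega
    have hfi : (Nat.factorial i : ℝ) ≠ 0 := Nat.cast_ne_zero.2 (Nat.factorial_ne_zero _)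
    have hfj : (Nat.factorial j : ℝ) ≠ 0 := Nat.cast_ne_zero.2 (Nat.factorial_ne_zero _)
    have hm1 : (-1:ℝ) ^ (i + j) = (-1:ℝ) ^ i * (-1:ℝ) ^ j := pow_add _ _ _
    rw [hG, hcp, hpow, hm1]
    have hc1 : (c : ℝ) ^ (i + j) ≠ 0 := pow_ne_zero _ hc.ne'
    have hc2 : (c : ℝ) ^ ((l - i) + (k - j)) ≠ 0 := pow_ne_zero _ hc.ne'
    field_simp
  rw [step1, Finset.sum_congr rfl (fun i hi => Finset.sum_congr rfl (fun j hj => step2 i hi j hj))]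
  have pullconst : ∑ i ∈ range (l + 1), ∑ j ∈ range (k + 1),
      Real.Gamma (γ + 1) / c ^ (γ + 1) / c ^ (k + l) *
          ((-1:ℝ) ^ (i + j) * genChoose ((l:ℝ) + γ) (l - i) * genChoose ((k:ℝ) + γ) (k - j)
            * Pg γ (i + j) * a ^ i * b ^ j * c ^ ((l - i) + (k - j))
            / ((Nat.factorial i : ℝ) * (Nat.factorial j : ℝ)))
      = Real.Gamma (γ + 1) / c ^ (γ + 1) / c ^ (k + l) *
          ∑ i ∈ range (l + 1), ∑ j ∈ range (k + 1),
            (-1:ℝ) ^ (i + j) * genChoose ((l:ℝ) + γ) (l - i) * genChoose ((k:ℝ) + γ) (k - j)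
              * Pg γ (i + j) * a ^ i * b ^ j * c ^ ((l - i) + (k - j))
              / ((Nat.factorial i : ℝ) * (Nat.factorial j : ℝ)) := by
    rw [Finset.mul_sum]
    exact Finset.sum_congr rfl fun i _ => (Finset.mul_sum _ _ _).symm
  rw [pullconst, main_sum a b c γ hlk]
  -- Step 3: identify the right-hand side
  have hG2 : Real.Gamma ((k : ℝ) + γ + 1) = Real.Gamma (γ + 1) * Pg γ k := by
    rw [show (k : ℝ) + γ + 1 = γ + 1 + (k : ℝ) by ring]
    exact Gamma_Pg hγ k
  have hcp2 : c ^ ((k : ℝ) + γ + 1) = c ^ (γ + 1) * c ^ k := by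
    rw [show (k : ℝ) + γ + 1 = (γ + 1) + (k : ℝ) by ring, Real.rpow_add hc, Real.rpow_natCast]
  rw [hG2, hcp2]
  unfold jacobi
  have hA : ((1 - 2 * ((c - a) * (c - b) / (c * (c - a - b))) - 1) / 2)
      = (c - a) * (c - b) / (c * (a + b - c)) := by
    field_simp
    ring
  have hB : ((1 - 2 * ((c - a) * (c - b) / (c * (c - a - b))) + 1) / 2)
      = a * b / (c * (a + b - c)) := by
    field_simp
    ring
  rw [hA, hB]
  have hKL : ∀ s ∈ range (l + 1),
      genChoose ((l:ℝ) + ((k : ℝ) - (l : ℝ))) (l - s) * genChoose ((l:ℝ) + γ) s *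
        ((c - a) * (c - b) / (c * (a + b - c))) ^ s * (a * b / (c * (a + b - c))) ^ (l - s)
      = ((k.choose (l - s) : ℝ)) * genChoose ((l:ℝ) + γ) s *
        ((c - a) * (c - b) / (c * (a + b - c))) ^ s * (a * b / (c * (a + b - c))) ^ (l - s) := by
    intro s _
    rw [show (l:ℝ) + ((k : ℝ) - (l : ℝ)) = (k : ℝ) by ring, genChoose_natCast]
  rw [Finset.sum_congr rfl hKL]
  rw [Finset.mul_sum, Finset.mul_sum, Finset.mul_sum]
  refine Finset.sum_congr rfl fun s hs => ?_
  rw [Finset.mem_range] at hs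
  have hs' : s ≤ l := by omega
  have e1 : ((c - a) * (c - b) / (c * (a + b - c))) ^ s
      = (c - a) ^ s * (c - b) ^ s / (c ^ s * (a + b - c) ^ s) := by
    rw [div_pow, mul_pow, mul_pow]
  have e2 : (a * b / (c * (a + b - c))) ^ (l - s)
      = a ^ (l - s) * b ^ (l - s) / (c ^ (l - s) * (a + b - c) ^ (l - s)) := by
    rw [div_pow, mul_pow, mul_pow]
  have e3 : (c - b) ^ (k - l + s) = (c - b) ^ (k - l) * (c - b) ^ s := pow_add _ _ _
  have e4 : (c : ℝ) ^ (k + l) = c ^ k * c ^ s * c ^ (l - s) := by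
    rw [← pow_add, ← pow_add]; congr 1; omega
  have e5 : (a + b - c) ^ l = (a + b - c) ^ s * (a + b - c) ^ (l - s) := by
    rw [← pow_add]; congr 1; omega
  have e6 : (a * b) ^ (l - s) = a ^ (l - s) * b ^ (l - s) := mul_pow _ _ _
  rw [e1, e2, e3, e4, e5, e6]
  have h1 : (c:ℝ) ^ s ≠ 0 := pow_ne_zero _ hc.ne'
  have h2 : (c:ℝ) ^ (l - s) ≠ 0 := pow_ne_zero _ hc.ne'
  have h3 : (c:ℝ) ^ k ≠ 0 := pow_ne_zero _ hc.ne'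
  have h4 : (a + b - c) ^ s ≠ 0 := pow_ne_zero _ hw
  have h5 : (a + b - c) ^ (l - s) ≠ 0 := pow_ne_zero _ hw
  field_simp
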